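/- arXiv:1704.08356 — 6 statements merged into one kernel-verified Lean document; each statement's English description precedes it below -/
import Mathlib

section
/- (Theorem 4.1, matrix form at a fixed frequency) Suppose nodes i and j (i ≠ j) are strict two-hop neighbors of the grid graph: b i j = 0, but there exists a node k with b k i > 0 and b k j > 0. Then the Wiener filter coefficient W j i = −(Φ⁻¹) j i / (Φ⁻¹) j j is a strictly negative real number, i.e. Im(W j i) = 0 and Re(W j i) < 0; equivalently, the phase of W j i is −π (mod 2π) at the frequency ω. -/
open Matrix Complex

/-- The characteristic polynomial term `S_j(z)` of the discretized swing equation,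
evaluated at `z = e^{iω}`. -/
noncomputable def gridS (N : ℕ) (ω : ℝ) (b : Fin N → Fin N → ℝ) (ts : ℝ)
    (M D : Fin N → ℝ) (j : Fin N) : ℂ :=
  ((M j / ts ^ 2 : ℝ) : ℂ) * (Complex.exp (Complex.I * ω) - 1) ^ 2 +
    ((D j / ts : ℝ) : ℂ) * (Complex.exp (Complex.I * ω) - 1) + ((∑ i, b i j : ℝ) : ℂ)

/-- The transfer-function matrix `H` of the swing-equation linear dynamic graph:
`H j i = b j i / S j` for `i ≠ j`, `H j j = 0`. -/
noncomputable def gridH (N : ℕ) (ω : ℝ) (b : Fin N → Fin N → ℝ) (ts : ℝ)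
    (M D : Fin N → ℝ) : Matrix (Fin N) (Fin N) ℂ :=
  Matrix.of fun j i => if i = j then 0 else ((b j i : ℝ) : ℂ) / gridS N ω b ts M D j

/-- The power spectral density matrix `Φ = (I − H)⁻¹ diag(d) ((I − H)⁻¹)ᴴ`. -/
noncomputable def gridPhi (N : ℕ) (ω : ℝ) (b : Fin N → Fin N → ℝ) (ts : ℝ)
    (M D : Fin N → ℝ) (d : Fin N → ℝ) : Matrix (Fin N) (Fin N) ℂ :=
  (1 - gridH N ω b ts M D)⁻¹ * Matrix.diagonal (fun k => ((d k : ℝ) : ℂ)) *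
    ((1 - gridH N ω b ts M D)⁻¹)ᴴ

/-- **Theorem 4.1** (matrix form at a fixed frequency): if `i` and `j` are strict
two-hop neighbors of the grid graph, then the Wiener filter coefficient
`W j i = −(Φ⁻¹) j i / (Φ⁻¹) j j` is a strictly negative real number, i.e. its
phase is `−π` (mod `2π`). -/
theorem wiener_coeff_spurious_edge_negative_real
    (N : ℕ) (hN : 1 ≤ N) (ω : ℝ) (b : Fin N → Fin N → ℝ)
    (hsym : ∀ i j, b i j = b j i) (hnonneg : ∀ i j, 0 ≤ b i j)
    (hhollow : ∀ i, b i i = 0)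
    (ts : ℝ) (hts : 0 < ts) (M D : Fin N → ℝ)
    (hS : ∀ j, gridS N ω b ts M D j ≠ 0)
    (d : Fin N → ℝ) (hd : ∀ j, 0 < d j)
    (hinv : IsUnit (1 - gridH N ω b ts M D))
    (i j : Fin N) (hij : i ≠ j) (hbij : b i j = 0)
    (hk : ∃ k, 0 < b k i ∧ 0 < b k j) :
    IsUnit (gridPhi N ω b ts M D d) ∧
      (-(((gridPhi N ω b ts M D d)⁻¹) j i) / ((gridPhi N ω b ts M D d)⁻¹) j j).im = 0 ∧
      (-(((gridPhi N ω b ts M D d)⁻¹) j i) / ((gridPhi N ω b ts M D d)⁻¹) j j).re < 0 := by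
  set S : Fin N → ℂ := gridS N ω b ts M D with hSdef
  set A : Matrix (Fin N) (Fin N) ℂ := 1 - gridH N ω b ts M D with hAdef
  have hdne : ∀ k, (d k : ℝ) ≠ 0 := fun k => (hd k).ne'
  have hAdet : IsUnit A.det := (Matrix.isUnit_iff_isUnit_det A).mp hinv
  have hAinv : A * A⁻¹ = 1 := Matrix.mul_nonsing_inv A hAdet
  have hinvA : A⁻¹ * A = 1 := Matrix.nonsing_inv_mul A hAdet
  set Δ : Matrix (Fin N) (Fin N) ℂ := Matrix.diagonal (fun k => ((d k : ℝ) : ℂ)) with hΔdef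
  set Δ' : Matrix (Fin N) (Fin N) ℂ :=
    Matrix.diagonal (fun k => (((d k)⁻¹ : ℝ) : ℂ)) with hΔ'def
  set Ψ : Matrix (Fin N) (Fin N) ℂ := Aᴴ * Δ' * A with hΨdef
  have hΔΔ' : Δ * Δ' = 1 := by
    rw [hΔdef, hΔ'def, Matrix.diagonal_mul_diagonal]
    ext k l
    rcases eq_or_ne k l with h | h
    · subst h
      simp only [Matrix.diagonal_apply_eq, Matrix.one_apply_eq]
      rw [← Complex.ofReal_mul, mul_inv_cancel₀ (hdne k), Complex.ofReal_one]
    · simp [Matrix.diagonal_apply_ne _ h, Matrix.one_apply_ne h]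
  have h1 : (A⁻¹)ᴴ * Aᴴ = 1 := by
    rw [← Matrix.conjTranspose_mul, hAinv, Matrix.conjTranspose_one]
  have hΦΨ : gridPhi N ω b ts M D d * Ψ = 1 := by
    have e1 : gridPhi N ω b ts M D d * Ψ
        = A⁻¹ * (Δ * (((A⁻¹)ᴴ * Aᴴ) * (Δ' * A))) := by
      simp only [gridPhi, hΨdef, ← hAdef, ← hΔdef, ← hΔ'def, Matrix.mul_assoc]
    rw [e1, h1, one_mul, ← Matrix.mul_assoc Δ, hΔΔ', one_mul, hinvA]
  have hUnit : IsUnit (gridPhi N ω b ts M D d) := by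
    rw [Matrix.isUnit_iff_isUnit_det]
    exact IsUnit.of_mul_eq_one Ψ.det (by rw [← Matrix.det_mul, hΦΨ, Matrix.det_one])
  have hΦinv : (gridPhi N ω b ts M D d)⁻¹ = Ψ := Matrix.inv_eq_right_inv hΦΨ
  -- entries of A
  have hA_apply : ∀ k l, A k l = if k = l then 1 else -((b k l : ℂ) / S k) := by
    intro k l
    by_cases h : k = l
    · subst h
      simp [hAdef, gridH, Matrix.sub_apply, Matrix.one_apply]
    · simp [hAdef, gridH, Matrix.sub_apply, Matrix.one_apply, h, Ne.symm h]
      rfl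
  have hΨ_apply : ∀ l m, Ψ l m = ∑ k, (starRingEnd ℂ) (A k l) *
      ((((d k)⁻¹ : ℝ) : ℂ) * A k m) := by
    intro l m
    rw [hΨdef, Matrix.mul_assoc, Matrix.mul_apply]
    refine Finset.sum_congr rfl fun k _ => ?_
    rw [Matrix.conjTranspose_apply, hΔ'def, Matrix.diagonal_mul]
    rfl
  -- the (j,i) entry is a nonnegative real, positive thanks to the two-hop witness
  set g : Fin N → ℝ := fun k =>
    if k = i ∨ k = j then 0 else (d k)⁻¹ * (b k j * b k i / Complex.normSq (S k)) with hgdef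
  have hΨji : Ψ j i = ((∑ k, g k : ℝ) : ℂ) := by
    rw [hΨ_apply, Complex.ofReal_sum]
    refine Finset.sum_congr rfl fun k _ => ?_
    by_cases hki : k = i
    · subst hki
      have : A k j = -((b k j : ℂ) / S k) := by
        rw [hA_apply]; simp [hij]
      rw [this, hbij]
      simp [hgdef]
    · by_cases hkj : k = j
      · subst hkj
        have : A k i = -((b k i : ℂ) / S k) := by
          rw [hA_apply]; simp [Ne.symm hij]
        rw [this]
        have hbji : b k i = 0 := by rw [← hsym]; exact hbij
        simp [hgdef, hbji]
      · have e1 : A k j = -((b k j : ℂ) / S k) := by rw [hA_apply]; simp [hkj]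
        have e2 : A k i = -((b k i : ℂ) / S k) := by rw [hA_apply]; simp [hki]
        rw [e1, e2, hgdef]
        simp only [hki, hkj, or_self, if_false]
        have hSk := hS k
        have hSk' : (starRingEnd ℂ) (S k) ≠ 0 := star_ne_zero.mpr hSk
        rw [map_neg, map_div₀, Complex.conj_ofReal,
          Complex.ofReal_mul, Complex.ofReal_div, Complex.ofReal_mul,
          ← Complex.mul_conj]
        field_simp
  set q : Fin N → ℝ := fun k => (d k)⁻¹ * Complex.normSq (A k j) with hqdef
  have hΨjj : Ψ j j = ((∑ k, q k : ℝ) : ℂ) := by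
    rw [hΨ_apply, Complex.ofReal_sum]
    refine Finset.sum_congr rfl fun k _ => ?_
    rw [hqdef]
    rw [Complex.ofReal_mul, ← Complex.mul_conj]
    ring
  have hgpos : 0 < ∑ k, g k := by
    obtain ⟨k₀, hk₀i, hk₀j⟩ := hk
    have hk₀ne_i : k₀ ≠ i := fun h => by rw [h, hhollow] at hk₀i; exact lt_irrefl 0 hk₀i
    have hk₀ne_j : k₀ ≠ j := fun h => by rw [h, hhollow] at hk₀j; exact lt_irrefl 0 hk₀j
    refine Finset.sum_pos' (fun k _ => ?_) ⟨k₀, Finset.mem_univ k₀, ?_⟩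
    · rw [hgdef]
      dsimp only
      split_ifs with h
      · exact le_refl 0
      · have hnormSq : 0 < Complex.normSq (S k) := Complex.normSq_pos.mpr (hS k)
        have hb1 := hnonneg k j
        have hb2 := hnonneg k i
        have hd' := (hd k).le
        positivity
    · rw [hgdef]
      simp only [hk₀ne_i, hk₀ne_j, or_self, if_false]
      have hnormSq : 0 < Complex.normSq (S k₀) := Complex.normSq_pos.mpr (hS k₀)
      have := hd k₀
      positivity
  have hqpos : 0 < ∑ k, q k := by
    refine Finset.sum_pos' (fun k _ => ?_) ⟨j, Finset.mem_univ j, ?_⟩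
    · rw [hqdef]
      have := (hd k).le
      have := Complex.normSq_nonneg (A k j)
      positivity
    · rw [hqdef]
      dsimp only
      rw [hA_apply, if_pos rfl, Complex.normSq_one, mul_one]
      exact inv_pos.mpr (hd j)
  refine ⟨hUnit, ?_, ?_⟩
  · rw [hΦinv, hΨji, hΨjj, ← Complex.ofReal_neg, ← Complex.ofReal_div]
    exact Complex.ofReal_im _
  · rw [hΦinv, hΨji, hΨjj, ← Complex.ofReal_neg, ← Complex.ofReal_div, Complex.ofReal_re]
    exact div_neg_of_neg_of_pos (neg_neg_of_pos hgpos) hqpos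
end

section
/- (Theorem B.1, support of the Wiener filter / moral graph) Suppose i ≠ j, b i j = 0, and there is no node k with b k i > 0 and b k j > 0 (so i is neither a neighbor nor a two-hop neighbor of j in the grid graph). Then (Φ⁻¹) j i = 0, and consequently the Wiener filter coefficient W j i = −(Φ⁻¹) j i / (Φ⁻¹) j j equals 0. -/
open Matrix Complex

/-- **Theorem B.1** (support of the Wiener filter / moral graph): if `i` is neither a
neighbor nor a two-hop neighbor of `j` in the grid graph, then `(Φ⁻¹) j i = 0` and the
Wiener filter coefficient `W j i = −(Φ⁻¹) j i / (Φ⁻¹) j j` equals `0`. -/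
theorem wiener_coeff_vanishes_outside_moral_graph
    (N : ℕ) (hN : 1 ≤ N) (ω : ℝ) (b : Fin N → Fin N → ℝ)
    (hsym : ∀ i j, b i j = b j i) (hnonneg : ∀ i j, 0 ≤ b i j)
    (hhollow : ∀ i, b i i = 0)
    (ts : ℝ) (hts : 0 < ts) (M D : Fin N → ℝ)
    (hS : ∀ j, gridS N ω b ts M D j ≠ 0)
    (d : Fin N → ℝ) (hd : ∀ j, 0 < d j)
    (hinv : IsUnit (1 - gridH N ω b ts M D))
    (i j : Fin N) (hij : i ≠ j) (hbij : b i j = 0)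
    (hk : ¬ ∃ k, 0 < b k i ∧ 0 < b k j) :
    ((gridPhi N ω b ts M D d)⁻¹) j i = 0 ∧
      -(((gridPhi N ω b ts M D d)⁻¹) j i) / ((gridPhi N ω b ts M D d)⁻¹) j j = 0 := by
  set A := 1 - gridH N ω b ts M D with hA
  have hdet : IsUnit A.det := (Matrix.isUnit_iff_isUnit_det A).mp hinv
  have hdetH : IsUnit Aᴴ.det := by
    rw [Matrix.det_conjTranspose]; exact hdet.star
  -- key: for each k, one of the two factors vanishes
  have hAkey : ∀ k, A k j = 0 ∨ A k i = 0 := by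
    intro k
    by_cases hkj : k = j
    · right
      have hbji : b j i = 0 := (hsym j i).trans hbij
      simp [hA, gridH, Matrix.sub_apply, Matrix.one_apply, hkj, hij, Ne.symm hij, hbji]
    · by_cases hki : k = i
      · left
        simp [hA, gridH, Matrix.sub_apply, Matrix.one_apply, hki, hij, Ne.symm hij, hbij]
      · push_neg at hk
        by_cases hbki : b k i = 0
        · right
          simp [hA, gridH, Matrix.sub_apply, Matrix.one_apply, hki, Ne.symm hki, hbki]
        · left
          have hpos : 0 < b k i := lt_of_le_of_ne (hnonneg k i) (Ne.symm hbki)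
          have hbkj : b k j = 0 := le_antisymm (hk k hpos) (hnonneg k j)
          simp [hA, gridH, Matrix.sub_apply, Matrix.one_apply, hkj, Ne.symm hkj, hbkj]
  have hPhiInv : (gridPhi N ω b ts M D d)⁻¹ =
      Aᴴ * (Matrix.diagonal (fun k => ((d k : ℝ) : ℂ)))⁻¹ * A := by
    rw [gridPhi, ← hA, Matrix.mul_inv_rev, Matrix.mul_inv_rev,
      Matrix.conjTranspose_nonsing_inv, Matrix.nonsing_inv_nonsing_inv _ hdetH,
      Matrix.nonsing_inv_nonsing_inv _ hdet, mul_assoc]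
  have hzero : ((gridPhi N ω b ts M D d)⁻¹) j i = 0 := by
    rw [hPhiInv, Matrix.inv_diagonal]
    rw [Matrix.mul_apply]
    apply Finset.sum_eq_zero
    intro k _
    rw [Matrix.mul_diagonal, Matrix.conjTranspose_apply]
    rcases hAkey k with h | h <;> simp [h]
  exact ⟨hzero, by simp [hzero]⟩
end

section
/- (Spurious-edge entry of the inverse power spectral density) Suppose i ≠ j and b i j = 0. Then (Φ⁻¹) j i = Σ_{k} b k j · b k i / (d k · |S k|²), which is a nonnegative real number; moreover, if there exists k with b k i > 0 and b k j > 0, then (Φ⁻¹) j i is a strictly positive real number. -/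
open Matrix Complex

/-- **Spurious-edge entry of the inverse power spectral density**: if `i ≠ j` and
`b i j = 0`, then `(Φ⁻¹) j i = Σ_k b k j · b k i / (d k · |S k|²)`, a nonnegative real
number, which is strictly positive whenever `i` and `j` have a common neighbor `k`. -/
theorem inv_psd_spurious_edge_entry
    (N : ℕ) (hN : 1 ≤ N) (ω : ℝ) (b : Fin N → Fin N → ℝ)
    (hsym : ∀ i j, b i j = b j i) (hnonneg : ∀ i j, 0 ≤ b i j)
    (hhollow : ∀ i, b i i = 0)
    (ts : ℝ) (hts : 0 < ts) (M D : Fin N → ℝ)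
    (hS : ∀ j, gridS N ω b ts M D j ≠ 0)
    (d : Fin N → ℝ) (hd : ∀ j, 0 < d j)
    (hinv : IsUnit (1 - gridH N ω b ts M D))
    (i j : Fin N) (hij : i ≠ j) (hbij : b i j = 0) :
    ((gridPhi N ω b ts M D d)⁻¹) j i =
        ((∑ k, b k j * b k i / (d k * ‖gridS N ω b ts M D k‖ ^ 2) : ℝ) : ℂ) ∧
      0 ≤ (((gridPhi N ω b ts M D d)⁻¹) j i).re ∧
      (((gridPhi N ω b ts M D d)⁻¹) j i).im = 0 ∧
      ((∃ k, 0 < b k i ∧ 0 < b k j) → 0 < (((gridPhi N ω b ts M D d)⁻¹) j i).re) := by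
  classical
  set S := gridS N ω b ts M D with hSdef
  set A := 1 - gridH N ω b ts M D with hA
  have hdetA : IsUnit A.det := (Matrix.isUnit_iff_isUnit_det A).mp hinv
  have hdetAH : IsUnit Aᴴ.det := by
    rw [Matrix.det_conjTranspose]; exact hdetA.star
  have hkey : (gridPhi N ω b ts M D d)⁻¹
      = Aᴴ * (Matrix.diagonal (fun k => ((d k : ℝ) : ℂ)))⁻¹ * A := by
    rw [gridPhi, ← hA, Matrix.conjTranspose_nonsing_inv, Matrix.mul_inv_rev,
      Matrix.mul_inv_rev, Matrix.nonsing_inv_nonsing_inv _ hdetAH,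
      Matrix.nonsing_inv_nonsing_inv _ hdetA, mul_assoc]
  have hentry : ((gridPhi N ω b ts M D d)⁻¹) j i
      = ∑ k, star (A k j) * ((d k : ℂ))⁻¹ * A k i := by
    have hdiag : (Matrix.diagonal fun k => ((d k : ℝ) : ℂ))⁻¹
        = Matrix.diagonal (fun k => ((d k : ℂ))⁻¹) := by
      apply Matrix.inv_eq_right_inv
      have h1 : (fun k => ((d k : ℝ) : ℂ) * ((d k : ℂ))⁻¹) = fun _ => (1 : ℂ) := by
        funext k
        exact mul_inv_cancel₀ (by exact_mod_cast (hd k).ne')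
      rw [Matrix.diagonal_mul_diagonal, h1, Matrix.diagonal_one]
    rw [hkey, hdiag]
    simp [Matrix.mul_apply, Matrix.diagonal_apply, Matrix.conjTranspose_apply,
      mul_ite, mul_zero, ite_mul, zero_mul, Finset.sum_ite_eq, Finset.sum_ite_eq']
  have hmain : ((gridPhi N ω b ts M D d)⁻¹) j i
      = ((∑ k, b k j * b k i / (d k * ‖S k‖ ^ 2) : ℝ) : ℂ) := by
    rw [hentry]
    push_cast
    apply Finset.sum_congr rfl
    intro k _
    have hAkj : A k j = (if k = j then 1 else 0) - (if j = k then 0 else (b k j : ℂ) / S k) := by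
      simp [hA, gridH, Matrix.one_apply, Matrix.sub_apply, hSdef]
    have hAki : A k i = (if k = i then 1 else 0) - (if i = k then 0 else (b k i : ℂ) / S k) := by
      simp [hA, gridH, Matrix.one_apply, Matrix.sub_apply, hSdef]
    by_cases hkj : k = j
    · subst hkj
      have : b k i = 0 := by rw [hsym]; exact hbij
      simp [hAki, hij.symm, this, hhollow k]
    · by_cases hki : k = i
      · subst hki
        simp [hAkj, hkj, Ne.symm hkj, hbij, hhollow k]
      · have hm : (starRingEnd ℂ) (S k) * S k = ((‖S k‖ : ℂ)) ^ 2 := by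
          rw [mul_comm, Complex.mul_conj, ← Complex.sq_norm]
          push_cast
          ring
        have hS' := hS k
        have hSc : (starRingEnd ℂ) (S k) ≠ 0 := by
          rw [← Complex.star_def]; exact star_ne_zero.mpr hS'
        have hdk : (d k : ℂ) ≠ 0 := by exact_mod_cast (hd k).ne'
        rw [hAkj, hAki]
        simp only [hkj, hki, Ne.symm hkj, Ne.symm hki, if_neg, if_false]
        push_cast
        rw [zero_sub, zero_sub, star_neg, star_div₀]
        simp only [Complex.star_def, Complex.conj_ofReal, ← hSdef]
        field_simp
        rw [← hm]
        field_simp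
  refine ⟨hmain, ?_, ?_, ?_⟩
  · rw [hmain, Complex.ofReal_re]
    apply Finset.sum_nonneg
    intro k _
    apply div_nonneg (mul_nonneg (hnonneg k j) (hnonneg k i))
    exact mul_nonneg (hd k).le (sq_nonneg _)
  · rw [hmain, Complex.ofReal_im]
  · rintro ⟨k, hki, hkj⟩
    rw [hmain, Complex.ofReal_re]
    apply Finset.sum_pos'
    · intro l _
      apply div_nonneg (mul_nonneg (hnonneg l j) (hnonneg l i))
      exact mul_nonneg (hd l).le (sq_nonneg _)
    · refine ⟨k, Finset.mem_univ k, ?_⟩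
      apply div_pos (mul_pos hkj hki)
      exact mul_pos (hd k) (pow_pos (norm_pos_iff.mpr (hS k)) 2)
end

section
/- (Off-diagonal entries of the precision matrix for hollow interaction matrices) Let H be an N×N complex matrix with zero diagonal (H j j = 0 for all j) such that I − H is invertible, let d : Fin N → ℝ with d k > 0 for all k, and set Φ = (I − H)⁻¹ · diag(d) · ((I − H)⁻¹)ᴴ. Then for all i ≠ j, (Φ⁻¹) j i = −H j i / d j − conj(H i j) / d i + Σ_{k ≠ i, k ≠ j} conj(H k j) · H k i / d k. -/
open Matrix

/-- **Off-diagonal entries of the precision matrix for hollow interaction matrices**: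
for `H` with zero diagonal, `I − H` invertible, and `Φ = (I − H)⁻¹ diag(d) ((I − H)⁻¹)ᴴ`,
the off-diagonal entries of `Φ⁻¹` are
`(Φ⁻¹) j i = −H j i / d j − conj(H i j) / d i + Σ_{k ≠ i, j} conj(H k j) H k i / d k`. -/
theorem precision_offdiag_formula
    (N : ℕ) (hN : 1 ≤ N) (H : Matrix (Fin N) (Fin N) ℂ)
    (hhollow : ∀ j, H j j = 0) (hinv : IsUnit (1 - H))
    (d : Fin N → ℝ) (hd : ∀ k, 0 < d k)
    (i j : Fin N) (hij : i ≠ j) :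
    ((((1 - H)⁻¹ * Matrix.diagonal (fun k => ((d k : ℝ) : ℂ)) * ((1 - H)⁻¹)ᴴ)⁻¹ : Matrix (Fin N) (Fin N) ℂ)) j i =
      -(H j i) / (d j : ℂ) - (starRingEnd ℂ) (H i j) / (d i : ℂ) +
        ∑ k ∈ Finset.univ.filter (fun k => k ≠ i ∧ k ≠ j),
          (starRingEnd ℂ) (H k j) * H k i / (d k : ℂ) := by
  set A : Matrix (Fin N) (Fin N) ℂ := 1 - H with hA
  have hdA : IsUnit A.det := (Matrix.isUnit_iff_isUnit_det A).mp hinv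
  have hdAH : IsUnit Aᴴ.det := by rwa [Matrix.det_conjTranspose, isUnit_star]
  have hd0 : ∀ k, ((d k : ℝ) : ℂ) ≠ 0 := fun k =>
    Complex.ofReal_ne_zero.mpr (ne_of_gt (hd k))
  have hdD : IsUnit (Matrix.diagonal (fun k => ((d k : ℝ) : ℂ))).det := by
    rw [Matrix.det_diagonal]
    exact isUnit_iff_ne_zero.mpr (Finset.prod_ne_zero_iff.mpr fun k _ => hd0 k)
  have hDinv : (Matrix.diagonal (fun k => ((d k : ℝ) : ℂ)))⁻¹
      = Matrix.diagonal (fun k => ((d k : ℝ) : ℂ)⁻¹) := by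
    refine Matrix.inv_eq_right_inv ?_
    have h1 : (fun k => ((d k:ℝ):ℂ) * ((d k:ℝ):ℂ)⁻¹) = fun _ => (1:ℂ) :=
      funext fun k => mul_inv_cancel₀ (hd0 k)
    rw [Matrix.diagonal_mul_diagonal, h1, Matrix.diagonal_one]
  have key : (A⁻¹ * Matrix.diagonal (fun k => ((d k:ℝ):ℂ)) * (A⁻¹)ᴴ)⁻¹
      = Aᴴ * Matrix.diagonal (fun k => ((d k:ℝ):ℂ)⁻¹) * A := by
    rw [Matrix.mul_inv_rev, Matrix.mul_inv_rev, Matrix.conjTranspose_nonsing_inv,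
      Matrix.nonsing_inv_nonsing_inv _ hdAH, Matrix.nonsing_inv_nonsing_inv _ hdA,
      hDinv, Matrix.mul_assoc]
  rw [key, Matrix.mul_apply]
  simp only [Matrix.mul_diagonal, Matrix.conjTranspose_apply]
  have hAdiag : ∀ k, A k k = 1 := fun k => by
    simp [hA, hhollow k]
  have hAoff : ∀ k l, k ≠ l → A k l = -H k l := fun k l h => by
    simp [hA, Matrix.one_apply_ne h]
  set s := Finset.univ.filter (fun k : Fin N => k ≠ i ∧ k ≠ j) with hs
  have hjs : j ∉ s := by simp [hs]
  have his : i ∉ insert j s := by simp [hs, hij]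
  have huniv : (Finset.univ : Finset (Fin N)) = insert i (insert j s) := by
    ext k
    by_cases hki : k = i <;> by_cases hkj : k = j <;> simp [hs, hki, hkj]
  rw [huniv, Finset.sum_insert his, Finset.sum_insert hjs]
  have hsum : ∑ k ∈ s, star (A k j) * ((d k:ℝ):ℂ)⁻¹ * A k i
      = ∑ k ∈ s, (starRingEnd ℂ) (H k j) * H k i / ((d k:ℝ):ℂ) := by
    refine Finset.sum_congr rfl fun k hk => ?_
    simp only [hs, Finset.mem_filter] at hk
    rw [hAoff k j hk.2.2, hAoff k i hk.2.1, starRingEnd_apply]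
    push_cast
    ring_nf
    rw [star_neg]
    ring
  rw [hsum, hAdiag i, hAdiag j, hAoff i j hij, hAoff j i hij.symm, starRingEnd_apply]
  rw [star_neg, star_one]
  ring
end

section
/- (Nonnegativity of the power spectral density) Let R : ℤ → ℝ be summable (Σ_{n∈ℤ}|R(n)| < ∞) and positive semidefinite in the sense that for every finitely supported c : ℤ → ℂ, the number Σ_{m,n∈ℤ} c(m)·conj(c(n))·R(m−n) is a nonnegative real. Then the spectral density φ(ω) = Σ_{n∈ℤ} R(n)·e^{−iωn} satisfies Re(φ(ω)) ≥ 0 and Im(φ(ω)) = 0 for every real ω, i.e. φ(ω) is a nonnegative real number at all frequencies. -/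
open Finset Filter Topology

lemma count_pairs (N : ℕ) (b : ℤ) :
    #{p ∈ (Finset.Ico (0:ℤ) N ×ˢ Finset.Ico (0:ℤ) N) | p.1 - p.2 = b}
      = N - b.natAbs := by
  have himg : {p ∈ (Finset.Ico (0:ℤ) N ×ˢ Finset.Ico (0:ℤ) N) | p.1 - p.2 = b}
      = (Finset.Ico (max 0 b) (min (N:ℤ) (N + b))).image (fun m => (m, m - b)) := by
    ext ⟨m, n⟩
    simp only [Finset.mem_filter, Finset.mem_product, Finset.mem_Ico, Finset.mem_image,
      Prod.mk.injEq, le_max_iff, lt_min_iff]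
    constructor
    · rintro ⟨⟨⟨hm0, hmN⟩, hn0, hnN⟩, hb⟩
      exact ⟨m, by simp [Finset.mem_Ico]; omega, rfl, by omega⟩
    · rintro ⟨a, ha, rfl, rfl⟩
      simp [Finset.mem_Ico] at ha
      refine ⟨⟨⟨by omega, by omega⟩, by omega, by omega⟩, by omega⟩
  rw [himg, Finset.card_image_of_injective _ (fun a b h => by simpa using (Prod.mk.injEq .. ▸ h).1),
    Int.card_Ico]
  omega

lemma key_sum (N : ℕ) (f : ℤ → ℂ) :
    ∑ m ∈ Finset.Ico (0:ℤ) N, ∑ n ∈ Finset.Ico (0:ℤ) N, f (m - n)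
      = ∑ b ∈ Finset.Ioo (-(N:ℤ)) N, ((N - b.natAbs : ℕ) : ℂ) * f b := by
  classical
  rw [← Finset.sum_product']
  rw [Finset.sum_comp f (fun p : ℤ × ℤ => p.1 - p.2)]
  have hsub : (Finset.Ico (0:ℤ) N ×ˢ Finset.Ico (0:ℤ) N).image (fun p : ℤ × ℤ => p.1 - p.2)
      ⊆ Finset.Ioo (-(N:ℤ)) N := by
    intro b hb
    simp only [Finset.mem_image, Finset.mem_product, Finset.mem_Ico] at hb
    obtain ⟨⟨m, n⟩, ⟨⟨h1, h2⟩, h3, h4⟩, rfl⟩ := hb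
    simp only [Finset.mem_Ioo]; omega
  rw [Finset.sum_subset hsub]
  · refine Finset.sum_congr rfl fun b _ => ?_
    rw [count_pairs, nsmul_eq_mul]
  · intro b _ hb
    have : #{p ∈ (Finset.Ico (0:ℤ) N ×ˢ Finset.Ico (0:ℤ) N) | p.1 - p.2 = b} = 0 := by
      rw [Finset.card_eq_zero, Finset.filter_eq_empty_iff]
      intro p hp hpb
      exact hb (Finset.mem_image.mpr ⟨p, hp, hpb⟩)
    rw [this, zero_smul]

/-- **Nonnegativity of the power spectral density**: if `R : ℤ → ℝ` is absolutely
summable and positive semidefinite (for every finitely supported `c : ℤ → ℂ`, the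
quadratic form `Σ_{m,n} c(m) conj(c(n)) R(m−n)` is a nonnegative real), then the spectral
density `φ(ω) = Σ_{n ∈ ℤ} R(n) e^{−iωn}` is a nonnegative real number at all
frequencies. -/
theorem spectral_density_nonneg
    (R : ℤ → ℝ) (hsum : Summable fun n : ℤ => |R n|)
    (hpsd : ∀ c : ℤ →₀ ℂ,
      (∑ m ∈ c.support, ∑ n ∈ c.support,
          c m * (starRingEnd ℂ) (c n) * ((R (m - n) : ℝ) : ℂ)).im = 0 ∧
      0 ≤ (∑ m ∈ c.support, ∑ n ∈ c.support,
          c m * (starRingEnd ℂ) (c n) * ((R (m - n) : ℝ) : ℂ)).re) :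
    ∀ ω : ℝ,
      0 ≤ (∑' n : ℤ, ((R n : ℝ) : ℂ) * Complex.exp (-(Complex.I * ω * n))).re ∧
      (∑' n : ℤ, ((R n : ℝ) : ℂ) * Complex.exp (-(Complex.I * ω * n))).im = 0 := by
  intro ω
  classical
  set f : ℤ → ℂ := fun k => ((R k : ℝ) : ℂ) * Complex.exp (-(Complex.I * ω * k)) with hf
  -- the test sequence
  have hcdef : ∀ N : ℕ, ∀ a : ℤ,
      (fun n : ℤ => if n ∈ Finset.Ico (0:ℤ) (N:ℤ) then Complex.exp (-(Complex.I * ω * n)) else 0) a ≠ 0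
        → a ∈ Finset.Ico (0:ℤ) (N:ℤ) := by
    intro N a ha
    by_contra h; simp [h] at ha
  set c : ℕ → (ℤ →₀ ℂ) := fun N => Finsupp.onFinset (Finset.Ico (0:ℤ) (N:ℤ)) _ (hcdef N) with hc
  set S : ℕ → ℂ := fun N => ∑ m ∈ (c N).support, ∑ n ∈ (c N).support,
      (c N) m * (starRingEnd ℂ) ((c N) n) * ((R (m - n) : ℝ) : ℂ) with hS
  have hcmem : ∀ (N : ℕ), ∀ n ∈ Finset.Ico (0:ℤ) (N:ℤ),
      (c N) n = Complex.exp (-(Complex.I * ω * n)) := by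
    intro N n hn
    simp only [hc, Finsupp.onFinset_apply, if_pos hn]
  have hcsupp : ∀ N : ℕ, (c N).support ⊆ Finset.Ico (0:ℤ) (N:ℤ) := fun N =>
    Finsupp.support_onFinset_subset
  -- Step A : S N as a weighted sum of f
  have stepA : ∀ N : ℕ,
      S N = ∑ b ∈ Finset.Ioo (-(N:ℤ)) (N:ℤ), ((N - b.natAbs : ℕ) : ℂ) * f b := by
    intro N
    rw [← key_sum N f, hS]
    beta_reduce
    have h1 : ∑ m ∈ (c N).support, ∑ n ∈ (c N).support,
        (c N) m * (starRingEnd ℂ) ((c N) n) * ((R (m - n) : ℝ) : ℂ)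
        = ∑ m ∈ Finset.Ico (0:ℤ) (N:ℤ), ∑ n ∈ Finset.Ico (0:ℤ) (N:ℤ),
        (c N) m * (starRingEnd ℂ) ((c N) n) * ((R (m - n) : ℝ) : ℂ) := by
      rw [Finset.sum_subset (hcsupp N)]
      · refine Finset.sum_congr rfl fun m _ => ?_
        rw [Finset.sum_subset (hcsupp N)]
        intro n _ hn
        rw [Finsupp.notMem_support_iff.mp hn]
        simp
      · intro m _ hm
        rw [Finsupp.notMem_support_iff.mp hm]
        simp
    rw [h1]
    refine Finset.sum_congr rfl fun m hm => Finset.sum_congr rfl fun n hn => ?_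
    rw [hcmem N m hm, hcmem N n hn, hf]
    have hconj : (starRingEnd ℂ) (Complex.exp (-(Complex.I * ω * n)))
        = Complex.exp (Complex.I * ω * n) := by
      rw [← Complex.exp_conj]
      congr 1
      simp [map_mul, Complex.conj_I]
    rw [hconj]
    rw [show Complex.exp (-(Complex.I * ω * m)) * Complex.exp (Complex.I * ω * n)
        = Complex.exp (-(Complex.I * ω * ((m : ℂ) - (n : ℂ)))) by
      rw [← Complex.exp_add]; ring_nf]
    push_cast
    ring
  
  -- the Cesàro means
  set F : ℕ → ℤ → ℂ := fun N k =>
    (((((N : ℕ) - k.natAbs : ℕ) : ℝ) / (N : ℝ) : ℝ) : ℂ) * f k with hF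
  have hnorm_f : ∀ k : ℤ, ‖f k‖ = |R k| := by
    intro k
    simp [hf, map_mul, Complex.norm_exp, Complex.norm_real]
  -- tsum of F N for positive N
  have htsumF : ∀ N : ℕ, 1 ≤ N → ∑' k : ℤ, F N k = (((N : ℝ)⁻¹ : ℝ) : ℂ) * S N := by
    intro N hN
    have hz : ∀ b : ℤ, b ∉ Finset.Ioo (-(N:ℤ)) (N:ℤ) → F N b = 0 := by
      intro b hb
      have : (N : ℕ) - b.natAbs = 0 := by
        simp only [Finset.mem_Ioo] at hb; omega
      simp [hF, this]
    rw [tsum_eq_sum hz, stepA N, Finset.mul_sum]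
    refine Finset.sum_congr rfl fun b _ => ?_
    simp only [hF]
    push_cast
    ring
  -- dominated convergence
  have hconv : Tendsto (fun N => ∑' k : ℤ, F N k) atTop (𝓝 (∑' k : ℤ, f k)) := by
    refine tendsto_tsum_of_dominated_convergence (bound := fun k => |R k|) hsum ?_ ?_
    · intro k
      have hcoeff : Tendsto (fun N : ℕ => ((((N : ℕ) - k.natAbs : ℕ) : ℝ) / (N : ℝ))) atTop
          (𝓝 1) := by
        have h1 : Tendsto (fun N : ℕ => 1 - (k.natAbs : ℝ) / (N : ℝ)) atTop (𝓝 1) := by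
          have := (tendsto_const_div_atTop_nhds_zero_nat (k.natAbs : ℝ)).const_sub 1
          simpa using this
        refine h1.congr' ?_
        filter_upwards [eventually_ge_atTop (max 1 k.natAbs)] with N hN
        have h1N : 1 ≤ N := le_trans (le_max_left _ _) hN
        have hkN : k.natAbs ≤ N := le_trans (le_max_right _ _) hN
        have hN0 : (N : ℝ) ≠ 0 := by positivity
        rw [Nat.cast_sub hkN, sub_div, div_self hN0]
      have : Tendsto (fun N : ℕ =>
          ((((((N : ℕ) - k.natAbs : ℕ) : ℝ) / (N : ℝ) : ℝ) : ℂ))) atTop (𝓝 (1 : ℂ)) := by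
        have := (Complex.continuous_ofReal.tendsto 1).comp hcoeff
        rw [Complex.ofReal_one] at this
        exact this
      simp only [hF]
      simpa using this.mul_const (f k)
    · filter_upwards with N k
      rw [hF]
      have hc0 : (0:ℝ) ≤ (((N : ℕ) - k.natAbs : ℕ) : ℝ) / (N : ℝ) := by positivity
      have hc1 : (((N : ℕ) - k.natAbs : ℕ) : ℝ) / (N : ℝ) ≤ 1 := by
        rcases Nat.eq_zero_or_pos N with h | h
        · simp [h]
        · rw [div_le_one (by positivity)]
          exact_mod_cast Nat.sub_le N k.natAbs
      calc ‖(((((N : ℕ) - k.natAbs : ℕ) : ℝ) / (N : ℝ) : ℝ) : ℂ) * f k‖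
          = ((((N : ℕ) - k.natAbs : ℕ) : ℝ) / (N : ℝ)) * |R k| := by
            rw [norm_mul, hnorm_f k, Complex.norm_real, Real.norm_eq_abs, abs_of_nonneg hc0]
        _ ≤ 1 * |R k| := by
            exact mul_le_mul_of_nonneg_right hc1 (abs_nonneg _)
        _ = |R k| := one_mul _
  -- pass to real and imaginary parts
  have him : Tendsto (fun N => (∑' k : ℤ, F N k).im) atTop (𝓝 ((∑' k : ℤ, f k).im)) :=
    (Complex.continuous_im.tendsto _).comp hconv
  have hre : Tendsto (fun N => (∑' k : ℤ, F N k).re) atTop (𝓝 ((∑' k : ℤ, f k).re)) :=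
    (Complex.continuous_re.tendsto _).comp hconv
  have him0 : ∀ᶠ N : ℕ in atTop, (∑' k : ℤ, F N k).im = 0 := by
    filter_upwards [eventually_ge_atTop 1] with N hN
    rw [htsumF N hN, Complex.im_ofReal_mul, (hpsd (c N)).1, mul_zero]
  have hre0 : ∀ᶠ N : ℕ in atTop, 0 ≤ (∑' k : ℤ, F N k).re := by
    filter_upwards [eventually_ge_atTop 1] with N hN
    rw [htsumF N hN, Complex.re_ofReal_mul]
    exact mul_nonneg (by positivity) (hpsd (c N)).2
  constructor
  · exact ge_of_tendsto hre hre0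
  · have h0 : Tendsto (fun N : ℕ => (∑' k : ℤ, F N k).im) atTop (𝓝 0) :=
      tendsto_const_nhds.congr' (by filter_upwards [him0] with N h; exact h.symm)
    exact tendsto_nhds_unique him h0
end

section
/- (Vanishing of off-diagonal precision entries outside the moral graph, general hollow form) Let H be an N×N complex matrix with zero diagonal (H j j = 0 for all j) such that I − H is invertible, let d : Fin N → ℝ with d k > 0 for all k, and set Φ = (I − H)⁻¹ · diag(d) · ((I − H)⁻¹)ᴴ. If i ≠ j, H j i = 0, H i j = 0, and there is no index k with H k j ≠ 0 and H k i ≠ 0, then (Φ⁻¹) j i = 0. -/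
open Matrix

/-- **Vanishing of off-diagonal precision entries outside the moral graph** (general
hollow form): for `H` with zero diagonal, `I − H` invertible,
`Φ = (I − H)⁻¹ diag(d) ((I − H)⁻¹)ᴴ`, if `i ≠ j`, `H j i = 0`, `H i j = 0`, and no `k`
has both `H k j ≠ 0` and `H k i ≠ 0`, then `(Φ⁻¹) j i = 0`. -/
theorem precision_vanishes_outside_moral_graph
    (N : ℕ) (hN : 1 ≤ N) (H : Matrix (Fin N) (Fin N) ℂ)
    (hhollow : ∀ j, H j j = 0) (hinv : IsUnit (1 - H))
    (d : Fin N → ℝ) (hd : ∀ k, 0 < d k)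
    (i j : Fin N) (hij : i ≠ j) (hji : H j i = 0) (hijz : H i j = 0)
    (hk : ¬ ∃ k, H k j ≠ 0 ∧ H k i ≠ 0) :
    ((((1 - H)⁻¹ * Matrix.diagonal (fun k => ((d k : ℝ) : ℂ)) * ((1 - H)⁻¹)ᴴ)⁻¹ :
        Matrix (Fin N) (Fin N) ℂ)) j i = 0 := by
  push_neg at hk
  have hdet : IsUnit (1 - H).det := (Matrix.isUnit_iff_isUnit_det _).mp hinv
  have h1 : ((1 - H)⁻¹)⁻¹ = 1 - H := Matrix.nonsing_inv_nonsing_inv _ hdet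
  have h2 : (((1 - H)⁻¹)ᴴ)⁻¹ = (1 - H)ᴴ := by
    rw [← Matrix.conjTranspose_nonsing_inv, h1]
  have h3 : (Matrix.diagonal (fun k => ((d k : ℝ) : ℂ)))⁻¹
      = Matrix.diagonal (fun k => (((d k : ℝ) : ℂ))⁻¹) := by
    apply Matrix.inv_eq_right_inv
    rw [Matrix.diagonal_mul_diagonal]
    have : (fun k => ((d k : ℝ) : ℂ) * (((d k : ℝ) : ℂ))⁻¹) = fun _ => (1 : ℂ) := by
      funext k
      exact mul_inv_cancel₀ (by exact_mod_cast (hd k).ne')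
    rw [this, Matrix.diagonal_one]
  rw [Matrix.mul_inv_rev, Matrix.mul_inv_rev, h1, h2, h3]
  rw [Matrix.mul_apply]
  refine Finset.sum_eq_zero fun k _ => ?_
  rw [Matrix.conjTranspose_apply, Matrix.mul_apply]
  rw [Finset.sum_eq_single k]
  · simp only [Matrix.diagonal_apply_eq, Matrix.sub_apply, Matrix.one_apply]
    by_cases hkj : H k j = 0
    · by_cases h : k = j
      · subst h
        have hne : k ≠ i := fun h => hij h.symm
        simp [hne, hji]
      · simp [h, hkj]
    · have hki := hk k hkj
      by_cases h : k = i
      · subst h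
        exact absurd hijz hkj
      · simp [h, hki]
  · intro b _ hb
    simp [Matrix.diagonal_apply_ne' _ hb]
  · simp
end
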